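/- Let p = (p_1, ..., p_n) be a probability distribution with all p_i > 0 and ∑ p_i = 1, and let ϖ ≥ 0 satisfy ϖ · max_i p_i < 2. Then the message importance measure is maximized by the uniform distribution: L(p, ϖ) ≤ L(u, ϖ) = ϖ (1 − 1/n), where u = (1/n, ..., 1/n). -/

import Mathlib

/-- Maximum value property: if `ϖ * max_i p_i < 2`, the message importance
measure is maximized by the uniform distribution, i.e.
`L(p, ϖ) ≤ L(u, ϖ) = ϖ * (1 - 1/n)`. -/
theorem mim_max_uniform {n : ℕ} (hn : 0 < n) (p : Fin n → ℝ)
    (hp : ∀ i, 0 < p i) (hsum : ∑ i, p i = 1)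
    (ϖ : ℝ) (hϖ : 0 ≤ ϖ)
    (hmax : ϖ * (Finset.univ.sup' (Finset.univ_nonempty_iff.mpr
      (Fin.pos_iff_nonempty.mp hn)) p) < 2) :
    Real.log (∑ i, p i * Real.exp (ϖ * (1 - p i))) ≤ ϖ * (1 - 1 / (n : ℝ)) := by
  have hne : (Finset.univ : Finset (Fin n)).Nonempty :=
    Finset.univ_nonempty_iff.mpr (Fin.pos_iff_nonempty.mp hn)
  set M : ℝ := Finset.univ.sup' hne p with hM
  set f : ℝ → ℝ := fun x => x * Real.exp (-(ϖ * x)) with hf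
  -- concavity of f on Icc 0 M
  have hconc : ConcaveOn ℝ (Set.Icc 0 M) f := by
    apply concaveOn_of_hasDerivWithinAt2_nonpos (f' := fun x => (1 - ϖ * x) * Real.exp (-(ϖ * x)))
      (f'' := fun x => ϖ * (ϖ * x - 2) * Real.exp (-(ϖ * x))) (convex_Icc 0 M)
    · exact (continuous_id.mul (Real.continuous_exp.comp (continuous_const.mul continuous_id).neg)).continuousOn
    · intro x hx
      have h1 : HasDerivAt (fun x : ℝ => x * Real.exp (-(ϖ * x)))
          ((1 - ϖ * x) * Real.exp (-(ϖ * x))) x := by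
        have he : HasDerivAt (fun x : ℝ => Real.exp (-(ϖ * x))) (-ϖ * Real.exp (-(ϖ * x))) x := by
          have := ((hasDerivAt_id x).const_mul ϖ).neg.exp
          simpa [mul_comm] using this
        have := (hasDerivAt_id x).mul he
        refine this.congr_deriv ?_
        simp only [id]
        ring
      exact h1.hasDerivWithinAt
    · intro x hx
      have he : HasDerivAt (fun x : ℝ => Real.exp (-(ϖ * x))) (-ϖ * Real.exp (-(ϖ * x))) x := by
        have := ((hasDerivAt_id x).const_mul ϖ).neg.exp
        simpa [mul_comm] using this
      have h1 : HasDerivAt (fun x : ℝ => (1 - ϖ * x) * Real.exp (-(ϖ * x)))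
          (ϖ * (ϖ * x - 2) * Real.exp (-(ϖ * x))) x := by
        have hg : HasDerivAt (fun x : ℝ => 1 - ϖ * x) (-ϖ) x := by
          simpa using ((hasDerivAt_id x).const_mul ϖ).const_sub 1
        have := hg.mul he
        refine this.congr_deriv ?_
        ring
      exact h1.hasDerivWithinAt
    · intro x hx
      rw [interior_Icc] at hx
      have hxM : x ≤ M := le_of_lt hx.2
      have : ϖ * x ≤ ϖ * M := mul_le_mul_of_nonneg_left hxM hϖ
      have h2 : ϖ * x - 2 ≤ 0 := by linarith
      have := mul_nonpos_of_nonneg_of_nonpos hϖ h2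
      exact mul_nonpos_of_nonpos_of_nonneg (by nlinarith [Real.exp_pos (-(ϖ*x))]) (Real.exp_pos _).le
  -- Jensen
  have hmem : ∀ i ∈ (Finset.univ : Finset (Fin n)), p i ∈ Set.Icc 0 M := by
    intro i _
    exact ⟨(hp i).le, Finset.le_sup' p (Finset.mem_univ i)⟩
  have hw : ∑ _i : Fin n, (1 / (n : ℝ)) = 1 := by
    simp [Finset.sum_const, Finset.card_univ]
    field_simp
  have hjensen := hconc.le_map_sum (w := fun _ => 1 / (n : ℝ)) (p := p)
    (fun i _ => by positivity) hw hmem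
  have hsum2 : ∑ i, (1 / (n : ℝ)) • p i = 1 / (n : ℝ) := by
    rw [← Finset.smul_sum, hsum, smul_eq_mul, mul_one]
  rw [hsum2] at hjensen
  -- hjensen : ∑ i, (1/n) • f (p i) ≤ f (1/n)
  have hnpos : (0:ℝ) < n := Nat.cast_pos.mpr hn
  have key : ∑ i, f (p i) ≤ (n : ℝ) * f (1 / n) := by
    have := mul_le_mul_of_nonneg_left hjensen hnpos.le
    calc ∑ i, f (p i) = (n:ℝ) * ∑ i, (1 / (n : ℝ)) • f (p i) := by
          rw [← Finset.smul_sum, smul_eq_mul]; field_simp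
      _ ≤ (n:ℝ) * f (1 / n) := this
  have hS : (∑ i, p i * Real.exp (ϖ * (1 - p i))) = Real.exp ϖ * ∑ i, f (p i) := by
    rw [Finset.mul_sum]
    congr 1; funext i
    rw [hf]
    simp only
    rw [show ϖ * (1 - p i) = ϖ + -(ϖ * p i) by ring, Real.exp_add]
    ring
  have hfn : (n : ℝ) * f (1 / n) = Real.exp (-(ϖ / n)) := by
    rw [hf]; simp only
    field_simp
  have hfinal : (∑ i, p i * Real.exp (ϖ * (1 - p i))) ≤ Real.exp (ϖ * (1 - 1 / n)) := by
    rw [hS]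
    calc Real.exp ϖ * ∑ i, f (p i) ≤ Real.exp ϖ * ((n:ℝ) * f (1/n)) :=
          mul_le_mul_of_nonneg_left key (Real.exp_pos _).le
      _ = Real.exp (ϖ * (1 - 1/n)) := by
          rw [hfn, ← Real.exp_add]; ring_nf
  have hpos : 0 < ∑ i, p i * Real.exp (ϖ * (1 - p i)) := by
    apply Finset.sum_pos (fun i _ => mul_pos (hp i) (Real.exp_pos _)) hne
  calc Real.log (∑ i, p i * Real.exp (ϖ * (1 - p i)))
      ≤ Real.log (Real.exp (ϖ * (1 - 1 / n))) := Real.log_le_log hpos hfinal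
    _ = ϖ * (1 - 1 / n) := Real.log_exp _
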